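/- Let n ≥ 1, let Σ be a p×p real positive semidefinite matrix, let z₁, …, zₙ be i.i.d. random vectors in ℝᵖ each with the centered Gaussian distribution N(0, Σ), and set S = (1/n) Σ_{i=1}^{n} zᵢ zᵢᵀ. With kₙ = n² / ((n−1)(n+2)) (assuming n ≥ 2), the statistic kₙ [ tr(S²) − (tr S)²/n ] is an unbiased estimator of tr(Σ²), i.e. E{ kₙ [ tr(S²) − (tr S)²/n ] } = tr(Σ²). -/

import Mathlib

open MeasureTheory ProbabilityTheory Matrix
open Real Filter



local notation "ν" => gaussianReal 0 1
local notation "φ" => gaussianPDFReal 0 1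

lemma pdf01 (x : ℝ) : φ x = (√(2 * π))⁻¹ * rexp (-(2⁻¹) * x ^ 2) := by
  simp only [gaussianPDFReal, NNReal.coe_one, mul_one, sub_zero]
  ring_nf

lemma hasDerivAt_pdf01 (x : ℝ) : HasDerivAt φ (-x * φ x) x := by
  have h1 : HasDerivAt (fun x : ℝ => -(2⁻¹) * x ^ 2) (-(2⁻¹) * (2 * x)) x := by
    simpa using ((hasDerivAt_pow 2 x).const_mul (-(2⁻¹) : ℝ))
  have h2 := (h1.exp).const_mul ((√(2 * π))⁻¹)
  have : (fun x : ℝ => (√(2 * π))⁻¹ * rexp (-(2⁻¹) * x ^ 2)) = φ := by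
    ext y; rw [pdf01]
  rw [this] at h2
  refine h2.congr_deriv ?_
  rw [pdf01]; ring

lemma integrable_pow_mul_gauss (k : ℕ) :
    Integrable (fun x : ℝ => x ^ k * rexp (-(2⁻¹) * x ^ 2)) := by
  have hg : Integrable (fun x : ℝ => ((Nat.factorial k : ℝ) * rexp 1) * rexp (-(4⁻¹ : ℝ) * x ^ 2)) :=
    (integrable_exp_neg_mul_sq (by norm_num)).const_mul _
  refine hg.mono' (Continuous.aestronglyMeasurable (by continuity)) ?_
  refine Filter.Eventually.of_forall (fun x => ?_)
  have h1 : |x| ^ k ≤ (Nat.factorial k : ℝ) * rexp |x| := by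
    have := Real.pow_div_factorial_le_exp (x := |x|) (abs_nonneg x) k
    rw [div_le_iff₀ (by positivity)] at this
    linarith [this]
  have h2 : |x| ≤ 4⁻¹ * x ^ 2 + 1 := by
    nlinarith [sq_nonneg (|x| - 2), sq_abs x]
  calc ‖x ^ k * rexp (-(2⁻¹) * x ^ 2)‖ = |x| ^ k * rexp (-(2⁻¹) * x ^ 2) := by
        rw [norm_mul, norm_pow, Real.norm_eq_abs, Real.norm_eq_abs, abs_exp]
    _ ≤ ((Nat.factorial k : ℝ) * rexp |x|) * rexp (-(2⁻¹) * x ^ 2) := by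
        apply mul_le_mul_of_nonneg_right h1 (exp_nonneg _)
    _ ≤ (Nat.factorial k : ℝ) * rexp 1 * rexp (-(4⁻¹ : ℝ) * x ^ 2) := by
        rw [mul_assoc, ← Real.exp_add, mul_assoc, ← Real.exp_add]
        apply mul_le_mul_of_nonneg_left (exp_le_exp.2 (by nlinarith [sq_abs x])) (by positivity)

lemma integrable_pdf_mul_pow (k : ℕ) : Integrable (fun x : ℝ => φ x * x ^ k) := by
  have := ((integrable_pow_mul_gauss k).const_mul ((√(2 * π))⁻¹))
  refine this.congr (Filter.Eventually.of_forall fun x => ?_)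
  simp only []
  rw [pdf01]; ring

/-- recurrence -/
lemma J_rec (k : ℕ) :
    (∫ x : ℝ, φ x * x ^ (k + 2)) = (k + 1 : ℝ) * ∫ x : ℝ, φ x * x ^ k := by
  have hderiv : ∀ x : ℝ, HasDerivAt (fun y => φ y * y ^ (k + 1))
      ((k + 1 : ℝ) * (φ x * x ^ k) - φ x * x ^ (k + 2)) x := by
    intro x
    have := (hasDerivAt_pdf01 x).mul (hasDerivAt_pow (k + 1) x)
    refine this.congr_deriv ?_
    push_cast
    ring
  have hf' : Integrable (fun x : ℝ => (k + 1 : ℝ) * (φ x * x ^ k) - φ x * x ^ (k + 2)) :=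
    ((integrable_pdf_mul_pow k).const_mul _).sub (integrable_pdf_mul_pow (k + 2))
  have h0 := integral_eq_zero_of_hasDerivAt_of_integrable hderiv hf' (integrable_pdf_mul_pow (k + 1))
  rw [integral_sub ((integrable_pdf_mul_pow k).const_mul _) (integrable_pdf_mul_pow (k + 2)),
    integral_const_mul] at h0
  linarith

lemma J_one : (∫ x : ℝ, φ x * x ^ 1) = 0 := by
  have hderiv : ∀ x : ℝ, HasDerivAt (fun y => -φ y) (φ x * x ^ 1) x := by
    intro x
    have := (hasDerivAt_pdf01 x).neg
    refine this.congr_deriv ?_; ring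
  exact integral_eq_zero_of_hasDerivAt_of_integrable hderiv (integrable_pdf_mul_pow 1)
    ((integrable_pdf_mul_pow 0).congr (Filter.Eventually.of_forall fun x => by simp)).neg

lemma J_zero : (∫ x : ℝ, φ x * x ^ 0) = 1 := by
  simpa using integral_gaussianPDFReal_eq_one 0 (v := 1) one_ne_zero

noncomputable def M (k : ℕ) : ℝ := ∫ x : ℝ, x ^ k ∂ν

lemma gaussianReal_eq_withDensity :
    ν = MeasureTheory.volume.withDensity (fun x => ((φ x).toNNReal : ENNReal)) := by
  rw [gaussianReal_of_var_ne_zero 0 one_ne_zero]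
  rfl

lemma M_eq (k : ℕ) : M k = ∫ x : ℝ, φ x * x ^ k := by
  rw [M, gaussianReal_eq_withDensity,
    integral_withDensity_eq_integral_smul ((measurable_gaussianPDFReal 0 1).real_toNNReal) (fun x => x ^ k)]
  congr 1; ext x
  rw [NNReal.smul_def, smul_eq_mul, Real.coe_toNNReal _ (gaussianPDFReal_nonneg 0 1 x)]

lemma integrable_pow_gauss (k : ℕ) : Integrable (fun x : ℝ => x ^ k) ν := by
  rw [gaussianReal_eq_withDensity, integrable_withDensity_iff_integrable_smul ((measurable_gaussianPDFReal 0 1).real_toNNReal)]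
  refine (integrable_pdf_mul_pow k).congr (Filter.Eventually.of_forall fun x => ?_)
  simp only []
  rw [NNReal.smul_def, smul_eq_mul, Real.coe_toNNReal _ (gaussianPDFReal_nonneg 0 1 x)]

lemma M_zero : M 0 = 1 := by rw [M_eq]; exact J_zero
lemma M_one : M 1 = 0 := by rw [M_eq]; exact J_one
lemma M_two : M 2 = 1 := by rw [M_eq, show 2 = 0 + 2 by rfl, J_rec, ← M_eq, M_zero]; norm_num
lemma M_three : M 3 = 0 := by rw [M_eq, show 3 = 1 + 2 by rfl, J_rec, ← M_eq, M_one]; norm_num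
lemma M_four : M 4 = 3 := by rw [M_eq, show 4 = 2 + 2 by rfl, J_rec, ← M_eq, M_two]; norm_num

lemma M_def (k : ℕ) : M k = ∫ x : ℝ, x ^ k ∂(gaussianReal 0 1) := rfl

/-- The standard Gaussian measure on `ℝᵖ`: the `p`-fold product of the standard
Gaussian measure on `ℝ`. -/
noncomputable def stdGaussian (p : ℕ) : Measure (Fin p → ℝ) :=
  Measure.pi fun _ => gaussianReal 0 1

lemma integrable_monomial {p : ℕ} (m : Fin p → ℕ) :
    Integrable (fun g : Fin p → ℝ => ∏ i, g i ^ m i) (stdGaussian p) := by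
  have := Integrable.fintype_prod (f := fun i (x : ℝ) => x ^ m i)
    (μ := fun _ => gaussianReal 0 1) (fun i => integrable_pow_gauss (m i))
  exact this

lemma integral_monomial {p : ℕ} (m : Fin p → ℕ) :
    ∫ g, ∏ i, g i ^ m i ∂(stdGaussian p) = ∏ i, M (m i) := by
  have := integral_fintype_prod_eq_prod (E := fun _ => ℝ) (f := fun i (x : ℝ) => x ^ m i)
    (μ := fun _ => gaussianReal 0 1)
  simp_rw [← M_def] at this
  exact this

lemma pow_indic {p : ℕ} (a : Fin p) (g : Fin p → ℝ) :
    g a = ∏ i, g i ^ (if a = i then 1 else 0) := by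
  have h : ∀ i ∈ Finset.univ, g i ^ (if a = i then 1 else 0) = if a = i then g i else 1 := by
    intro i _; split <;> simp
  rw [Finset.prod_congr rfl h, Finset.prod_ite_eq]
  simp

lemma G2 {p : ℕ} (a b : Fin p) :
    ∫ g, g a * g b ∂(stdGaussian p) = if a = b then 1 else 0 := by
  have hre : (fun g : Fin p → ℝ => g a * g b)
      = fun g => ∏ i, g i ^ ((if a = i then 1 else 0) + (if b = i then 1 else 0)) := by
    ext g
    simp_rw [pow_add, Finset.prod_mul_distrib, ← pow_indic]
  rw [hre, integral_monomial]
  by_cases hab : a = b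
  · subst hab
    simp only [if_pos rfl]
    apply Finset.prod_eq_one
    intro i _
    split <;> simp [M_two, M_zero]
  · rw [if_neg hab]
    apply Finset.prod_eq_zero (Finset.mem_univ a)
    have hba : ¬ b = a := fun h => hab h.symm
    simp [hba, M_one]

lemma integrable_G2 {p : ℕ} (a b : Fin p) :
    Integrable (fun g : Fin p → ℝ => g a * g b) (stdGaussian p) := by
  have hre : (fun g : Fin p → ℝ => g a * g b)
      = fun g => ∏ i, g i ^ ((if a = i then 1 else 0) + (if b = i then 1 else 0)) := by
    ext g
    simp_rw [pow_add, Finset.prod_mul_distrib, ← pow_indic]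
  rw [hre]; exact integrable_monomial _

lemma integrable_G4 {p : ℕ} (a b c d : Fin p) :
    Integrable (fun g : Fin p → ℝ => g a * g b * (g c * g d)) (stdGaussian p) := by
  have hre : (fun g : Fin p → ℝ => g a * g b * (g c * g d))
      = fun g => ∏ i, g i ^ ((if a = i then 1 else 0) + (if b = i then 1 else 0)
          + ((if c = i then 1 else 0) + (if d = i then 1 else 0))) := by
    ext g
    simp_rw [pow_add, Finset.prod_mul_distrib, ← pow_indic]
  rw [hre]; exact integrable_monomial _

lemma G4 {p : ℕ} (a b c d : Fin p) :
    ∫ g, g a * g b * (g c * g d) ∂(stdGaussian p)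
      = (if a = b then (1:ℝ) else 0) * (if c = d then (1:ℝ) else 0)
        + (if a = c then (1:ℝ) else 0) * (if b = d then (1:ℝ) else 0)
        + (if a = d then (1:ℝ) else 0) * (if b = c then (1:ℝ) else 0) := by
  have hre : (fun g : Fin p → ℝ => g a * g b * (g c * g d))
      = fun g => ∏ i, g i ^ ((if a = i then 1 else 0) + (if b = i then 1 else 0)
          + ((if c = i then 1 else 0) + (if d = i then 1 else 0))) := by
    ext g
    simp_rw [pow_add, Finset.prod_mul_distrib, ← pow_indic]
  rw [hre, integral_monomial]
  by_cases hab : a = b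
  · subst hab
    by_cases hcd : c = d
    · subst hcd
      by_cases hac : a = c
      · subst hac
        trans (3:ℝ)
        · have h : ∀ i ∈ Finset.univ, M ((if a = i then 1 else 0) + (if a = i then 1 else 0)
              + ((if a = i then 1 else 0) + (if a = i then 1 else 0))) = if a = i then 3 else 1 := by
            intro i _; split <;> simp [M_four, M_zero]
          rw [Finset.prod_congr rfl h, Finset.prod_ite_eq]
          simp
        · norm_num
      · trans (1:ℝ)
        · apply Finset.prod_eq_one
          intro i _
          by_cases h1 : a = i <;> by_cases h2 : c = i
          · exact absurd (h1.trans h2.symm) hac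
          · simp [h1, h2, M_two]
          · simp [h1, h2, M_two]
          · simp [h1, h2, M_zero]
        · simp [hac]
    · trans (0:ℝ)
      · apply Finset.prod_eq_zero (Finset.mem_univ c)
        have hdc : ¬ d = c := fun h => hcd h.symm
        by_cases hac : a = c <;> simp [hac, hdc, M_three, M_one]
      · by_cases hac : a = c
        · subst hac
          have had : ¬ a = d := fun h => hcd h
          simp [hcd, had]
        · simp [hcd, hac]
  · by_cases hac : a = c
    · subst hac
      by_cases hbd : b = d
      · subst hbd
        trans (1:ℝ)
        · apply Finset.prod_eq_one
          intro i _
          by_cases h1 : a = i <;> by_cases h2 : b = i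
          · exact absurd (h1.trans h2.symm) hab
          · simp [h1, h2, M_two]
          · simp [h1, h2, M_two]
          · simp [h1, h2, M_zero]
        · have hba : ¬ b = a := fun h => hab h.symm
          simp [hab, hba]
      · trans (0:ℝ)
        · apply Finset.prod_eq_zero (Finset.mem_univ b)
          have hba : ¬ a = b := hab
          have hdb : ¬ d = b := fun h => hbd h.symm
          simp [hba, hdb, M_one]
        · have hba : ¬ b = a := fun h => hab h.symm
          simp [hab, hbd, hba]
    · by_cases had : a = d
      · subst had
        by_cases hbc : b = c
        · subst hbc
          trans (1:ℝ)
          · apply Finset.prod_eq_one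
            intro i _
            by_cases h1 : a = i <;> by_cases h2 : b = i
            · exact absurd (h1.trans h2.symm) hab
            · simp [h1, h2, M_two]
            · simp [h1, h2, M_two]
            · simp [h1, h2, M_zero]
          · have hba : ¬ b = a := fun h => hab h.symm
            simp [hab, hac, hba]
        · trans (0:ℝ)
          · apply Finset.prod_eq_zero (Finset.mem_univ b)
            have hba : ¬ a = b := hab
            have hcb : ¬ c = b := fun h => hbc h.symm
            simp [hba, hcb, M_one]
          · simp [hab, hac, hbc]
      · trans (0:ℝ)
        · apply Finset.prod_eq_zero (Finset.mem_univ a)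
          have hba : ¬ b = a := fun h => hab h.symm
          have hca : ¬ c = a := fun h => hac h.symm
          have hda : ¬ d = a := fun h => had h.symm
          simp [hba, hca, hda, M_one]
        · simp [hab, hac, had]


section Quads
variable {p : ℕ}


lemma quad1 (f1 f2 f3 f4 : Fin p → ℝ) :
    ∑ s, ∑ t, ∑ u, ∑ v, (f1 s * f2 t * (f3 u * f4 v)) *
        ((if s = t then (1:ℝ) else 0) * (if u = v then (1:ℝ) else 0))
      = (∑ s, f1 s * f2 s) * (∑ u, f3 u * f4 u) := by
  rw [Finset.sum_mul]
  apply Finset.sum_congr rfl; intro s _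
  have h1 : ∀ t : Fin p, (∑ u, ∑ v, (f1 s * f2 t * (f3 u * f4 v)) *
      ((if s = t then (1:ℝ) else 0) * (if u = v then (1:ℝ) else 0)))
      = if s = t then f1 s * f2 t * ∑ u, f3 u * f4 u else 0 := by
    intro t
    by_cases hst : s = t
    · simp only [if_pos hst, one_mul, Finset.mul_sum]
      apply Finset.sum_congr rfl; intro u _
      simp only [mul_ite, mul_one, mul_zero, Finset.sum_ite_eq, Finset.mem_univ, if_true]
    · simp [hst]
  rw [Finset.sum_congr rfl (fun t _ => h1 t), Finset.sum_ite_eq, if_pos (Finset.mem_univ s)]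

lemma quad2 (f1 f2 f3 f4 : Fin p → ℝ) :
    ∑ s, ∑ t, ∑ u, ∑ v, (f1 s * f2 t * (f3 u * f4 v)) *
        ((if s = u then (1:ℝ) else 0) * (if t = v then (1:ℝ) else 0))
      = (∑ s, f1 s * f3 s) * (∑ t, f2 t * f4 t) := by
  rw [← quad1 f1 f3 f2 f4]
  apply Finset.sum_congr rfl; intro s _
  rw [Finset.sum_comm]
  apply Finset.sum_congr rfl; intro u _
  apply Finset.sum_congr rfl; intro t _
  apply Finset.sum_congr rfl; intro v _
  ring

lemma quad3 (f1 f2 f3 f4 : Fin p → ℝ) :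
    ∑ s, ∑ t, ∑ u, ∑ v, (f1 s * f2 t * (f3 u * f4 v)) *
        ((if s = v then (1:ℝ) else 0) * (if t = u then (1:ℝ) else 0))
      = (∑ s, f1 s * f4 s) * (∑ t, f2 t * f3 t) := by
  rw [← quad1 f1 f4 f2 f3]
  apply Finset.sum_congr rfl; intro s _
  have : ∀ t : Fin p, (∑ u, ∑ v, (f1 s * f2 t * (f3 u * f4 v)) *
      ((if s = v then (1:ℝ) else 0) * (if t = u then (1:ℝ) else 0)))
      = ∑ v, ∑ u, (f1 s * f2 t * (f3 u * f4 v)) *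
        ((if s = v then (1:ℝ) else 0) * (if t = u then (1:ℝ) else 0)) := by
    intro t; rw [Finset.sum_comm]
  rw [Finset.sum_congr rfl (fun t _ => this t), Finset.sum_comm]
  apply Finset.sum_congr rfl; intro v _
  apply Finset.sum_congr rfl; intro t _
  apply Finset.sum_congr rfl; intro u _
  ring

end Quads

/-- The centered Gaussian measure on `ℝᵖ` with covariance `A * Aᵀ`: the law of `A g`
for a standard Gaussian vector `g`. -/
noncomputable def gaussianCov {p : ℕ} (A : Matrix (Fin p) (Fin p) ℝ) : Measure (Fin p → ℝ) :=
  Measure.map (fun g => A.mulVec g) (stdGaussian p)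


section Cov
variable {p : ℕ} (A : Matrix (Fin p) (Fin p) ℝ)

lemma measurable_mulVecFun : Measurable (fun g : Fin p → ℝ => A.mulVec g) := by
  apply measurable_pi_lambda
  intro i
  simp only [Matrix.mulVec, dotProduct]
  exact Finset.measurable_sum _ (fun s _ => (measurable_pi_apply s).const_mul _)

lemma expand2 (a b : Fin p) (g : Fin p → ℝ) :
    A.mulVec g a * A.mulVec g b = ∑ s, ∑ t, (A a s * A b t) * (g s * g t) := by
  simp only [Matrix.mulVec, dotProduct]
  rw [Finset.sum_mul_sum]
  apply Finset.sum_congr rfl; intro s _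
  apply Finset.sum_congr rfl; intro t _
  ring

lemma expand4 (a b c d : Fin p) (g : Fin p → ℝ) :
    A.mulVec g a * A.mulVec g b * (A.mulVec g c * A.mulVec g d)
      = ∑ s, ∑ t, ∑ u, ∑ v, (A a s * A b t * (A c u * A d v)) * (g s * g t * (g u * g v)) := by
  rw [expand2 A a b g, expand2 A c d g, Finset.sum_mul_sum]
  apply Finset.sum_congr rfl; intro s _
  have h : ∀ u : Fin p, (∑ t, (A a s * A b t) * (g s * g t)) * (∑ v, (A c u * A d v) * (g u * g v))
      = ∑ t, ∑ v, ((A a s * A b t) * (g s * g t)) * ((A c u * A d v) * (g u * g v)) :=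
    fun u => Finset.sum_mul_sum _ _ _ _
  rw [Finset.sum_congr rfl (fun u _ => h u), Finset.sum_comm]
  apply Finset.sum_congr rfl; intro t _
  apply Finset.sum_congr rfl; intro u _
  apply Finset.sum_congr rfl; intro v _
  ring

lemma integrable_cov2 (a b : Fin p) :
    Integrable (fun x : Fin p → ℝ => x a * x b) (gaussianCov A) := by
  rw [gaussianCov, integrable_map_measure
    (Continuous.aestronglyMeasurable (by continuity))
    (measurable_mulVecFun A).aemeasurable]
  have : ((fun x : Fin p → ℝ => x a * x b) ∘ fun g => A.mulVec g)
      = fun g => ∑ s, ∑ t, (A a s * A b t) * (g s * g t) := by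
    ext g; exact expand2 A a b g
  rw [this]
  exact integrable_finset_sum _ (fun s _ => integrable_finset_sum _
    (fun t _ => (integrable_G2 s t).const_mul _))

lemma integrable_cov4 (a b c d : Fin p) :
    Integrable (fun x : Fin p → ℝ => x a * x b * (x c * x d)) (gaussianCov A) := by
  rw [gaussianCov, integrable_map_measure
    (Continuous.aestronglyMeasurable (by continuity))
    (measurable_mulVecFun A).aemeasurable]
  have : ((fun x : Fin p → ℝ => x a * x b * (x c * x d)) ∘ fun g => A.mulVec g)
      = fun g => ∑ s, ∑ t, ∑ u, ∑ v, (A a s * A b t * (A c u * A d v)) * (g s * g t * (g u * g v)) := by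
    ext g; exact expand4 A a b c d g
  rw [this]
  exact integrable_finset_sum _ (fun s _ => integrable_finset_sum _ (fun t _ =>
    integrable_finset_sum _ (fun u _ => integrable_finset_sum _
    (fun v _ => (integrable_G4 s t u v).const_mul _))))

lemma cov2 (a b : Fin p) :
    ∫ x, x a * x b ∂(gaussianCov A) = (A * Aᵀ) a b := by
  rw [gaussianCov, integral_map (measurable_mulVecFun A).aemeasurable
    (Continuous.aestronglyMeasurable (by continuity))]
  simp_rw [expand2 A a b]
  rw [integral_finset_sum _ (fun s _ => integrable_finset_sum _
    (fun t _ => (integrable_G2 s t).const_mul _))]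
  have h1 : ∀ s : Fin p, ∫ g, ∑ t, (A a s * A b t) * (g s * g t) ∂(stdGaussian p)
      = ∑ t, (A a s * A b t) * (if s = t then (1:ℝ) else 0) := by
    intro s
    rw [integral_finset_sum _ (fun t _ => (integrable_G2 s t).const_mul _)]
    exact Finset.sum_congr rfl (fun t _ => by rw [integral_const_mul, G2])
  rw [Finset.sum_congr rfl (fun s _ => h1 s)]
  simp only [mul_ite, mul_one, mul_zero, Finset.sum_ite_eq, Finset.mem_univ, if_true]
  rw [Matrix.mul_apply]
  exact Finset.sum_congr rfl (fun s _ => by rw [Matrix.transpose_apply])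

lemma cov4 (a b c d : Fin p) :
    ∫ x, x a * x b * (x c * x d) ∂(gaussianCov A)
      = (A * Aᵀ) a b * (A * Aᵀ) c d + (A * Aᵀ) a c * (A * Aᵀ) b d
        + (A * Aᵀ) a d * (A * Aᵀ) b c := by
  rw [gaussianCov, integral_map (measurable_mulVecFun A).aemeasurable
    (Continuous.aestronglyMeasurable (by continuity))]
  simp_rw [expand4 A a b c d]
  rw [integral_finset_sum _ (fun s _ => integrable_finset_sum _ (fun t _ =>
    integrable_finset_sum _ (fun u _ => integrable_finset_sum _
    (fun v _ => (integrable_G4 s t u v).const_mul _))))]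
  have h1 : ∀ s : Fin p,
      ∫ g, ∑ t, ∑ u, ∑ v, (A a s * A b t * (A c u * A d v)) * (g s * g t * (g u * g v))
          ∂(stdGaussian p)
      = ∑ t, ∑ u, ∑ v, (A a s * A b t * (A c u * A d v)) *
          ((if s = t then (1:ℝ) else 0) * (if u = v then (1:ℝ) else 0)
           + (if s = u then (1:ℝ) else 0) * (if t = v then (1:ℝ) else 0)
           + (if s = v then (1:ℝ) else 0) * (if t = u then (1:ℝ) else 0)) := by
    intro s
    rw [integral_finset_sum _ (fun t _ => integrable_finset_sum _
      (fun u _ => integrable_finset_sum _ (fun v _ => (integrable_G4 s t u v).const_mul _)))]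
    refine Finset.sum_congr rfl (fun t _ => ?_)
    rw [integral_finset_sum _ (fun u _ => integrable_finset_sum _
      (fun v _ => (integrable_G4 s t u v).const_mul _))]
    refine Finset.sum_congr rfl (fun u _ => ?_)
    rw [integral_finset_sum _ (fun v _ => (integrable_G4 s t u v).const_mul _)]
    refine Finset.sum_congr rfl (fun v _ => ?_)
    rw [integral_const_mul, G4]
  rw [Finset.sum_congr rfl (fun s _ => h1 s)]
  have hsplit : ∀ s t u v : Fin p, (A a s * A b t * (A c u * A d v)) *
      ((if s = t then (1:ℝ) else 0) * (if u = v then (1:ℝ) else 0)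
       + (if s = u then (1:ℝ) else 0) * (if t = v then (1:ℝ) else 0)
       + (if s = v then (1:ℝ) else 0) * (if t = u then (1:ℝ) else 0))
      = (A a s * A b t * (A c u * A d v)) *
          ((if s = t then (1:ℝ) else 0) * (if u = v then (1:ℝ) else 0))
        + (A a s * A b t * (A c u * A d v)) *
          ((if s = u then (1:ℝ) else 0) * (if t = v then (1:ℝ) else 0))
        + (A a s * A b t * (A c u * A d v)) *
          ((if s = v then (1:ℝ) else 0) * (if t = u then (1:ℝ) else 0)) := by
    intro s t u v; ring
  simp_rw [hsplit, Finset.sum_add_distrib]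
  rw [quad1 (fun s => A a s) (fun t => A b t) (fun u => A c u) (fun v => A d v),
    quad2 (fun s => A a s) (fun t => A b t) (fun u => A c u) (fun v => A d v),
    quad3 (fun s => A a s) (fun t => A b t) (fun u => A c u) (fun v => A d v)]
  simp_rw [Matrix.mul_apply, Matrix.transpose_apply]

end Cov

/-- The (uncentered) sample covariance matrix `S = (1/n) Σᵢ zᵢ zᵢᵀ`. -/
noncomputable def sampleCov {Ω : Type*} {p : ℕ} (n : ℕ) (z : Fin n → Ω → (Fin p → ℝ)) (ω : Ω) :
    Matrix (Fin p) (Fin p) ℝ :=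
  (n : ℝ)⁻¹ • ∑ i, Matrix.vecMulVec (z i ω) (z i ω)

lemma trace_vecMulVec_mul {p : ℕ} (u v : Fin p → ℝ) :
    (Matrix.vecMulVec u u * Matrix.vecMulVec v v).trace = (∑ k, u k * v k) ^ 2 := by
  simp only [Matrix.trace, Matrix.diag, Matrix.mul_apply, Matrix.vecMulVec_apply]
  rw [pow_two, Finset.sum_mul_sum]
  apply Finset.sum_congr rfl; intro k _
  apply Finset.sum_congr rfl; intro l _
  ring

lemma trace_vecMulVec {p : ℕ} (u : Fin p → ℝ) :
    (Matrix.vecMulVec u u).trace = ∑ k, u k * u k := by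
  simp [Matrix.trace, Matrix.diag, Matrix.vecMulVec_apply]

lemma sum_ite_diag {n : ℕ} (α β : ℝ) :
    (∑ i : Fin n, ∑ j : Fin n, if i = j then α else β)
      = (n : ℝ) * α + ((n : ℝ) ^ 2 - (n : ℝ)) * β := by
  have h : ∀ i : Fin n, (∑ j : Fin n, if i = j then α else β) = (n : ℝ) * β + (α - β) := by
    intro i
    have h2 : ∀ j : Fin n, (if i = j then α else β) = β + (if i = j then α - β else 0) := by
      intro j; split <;> ring
    rw [Finset.sum_congr rfl (fun j _ => h2 j), Finset.sum_add_distrib, Finset.sum_const,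
      Finset.sum_ite_eq, if_pos (Finset.mem_univ i), Finset.card_univ, Fintype.card_fin,
      nsmul_eq_mul]
  rw [Finset.sum_congr rfl (fun i _ => h i), Finset.sum_const, Finset.card_univ,
    Fintype.card_fin, nsmul_eq_mul]
  ring

/-- For i.i.d. `N(0, Σ)` vectors `z₁, …, zₙ` with `S = (1/n) Σᵢ zᵢ zᵢᵀ` and
`kₙ = n²/((n−1)(n+2))`, the statistic `kₙ[tr(S²) − (tr S)²/n]` is an unbiased
estimator of `tr(Σ²)`. -/
theorem unbiased_estimator_trace_sq {Ω : Type*} [MeasurableSpace Ω] (μ : Measure Ω)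
    [IsProbabilityMeasure μ]
    (n p : ℕ) (hn : 2 ≤ n)
    (V A : Matrix (Fin p) (Fin p) ℝ) (hV : V.PosSemidef) (hVA : V = A * Aᵀ)
    (z : Fin n → Ω → (Fin p → ℝ))
    (hmeas : ∀ i, Measurable (z i))
    (hindep : iIndepFun z μ)
    (hlaw : ∀ i, Measure.map (z i) μ = gaussianCov A) :
    ∫ ω, ((n : ℝ) ^ 2 / (((n : ℝ) - 1) * ((n : ℝ) + 2))) *
        ((sampleCov n z ω * sampleCov n z ω).trace - (sampleCov n z ω).trace ^ 2 / n) ∂μ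
      = (V * V).trace := by
  subst hVA
  -- abbreviations
  set T1 : ℝ := (A * Aᵀ).trace with hT1def
  set T2 : ℝ := ((A * Aᵀ) * (A * Aᵀ)).trace with hT2def
  -- symmetry of the covariance matrix
  have hsymm : ∀ k l, (A * Aᵀ) k l = (A * Aᵀ) l k := by
    intro k l
    have h : (A * Aᵀ)ᵀ = A * Aᵀ := by
      rw [Matrix.transpose_mul, Matrix.transpose_transpose]
    conv_lhs => rw [← h]
    rw [Matrix.transpose_apply]
  have hT2sum : ∑ k, ∑ l, (A * Aᵀ) k l * (A * Aᵀ) k l = T2 := by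
    rw [hT2def, Matrix.trace]
    apply Finset.sum_congr rfl; intro k _
    rw [Matrix.diag, Matrix.mul_apply]
    exact Finset.sum_congr rfl (fun l _ => by rw [hsymm k l])
  -- basic measurability
  have hzk : ∀ (i : Fin n) (k : Fin p), Measurable (fun ω => z i ω k) :=
    fun i k => (measurable_pi_apply k).comp (hmeas i)
  -- transfer lemmas
  have htrans : ∀ (i : Fin n) (F : (Fin p → ℝ) → ℝ), Continuous F →
      ∫ ω, F (z i ω) ∂μ = ∫ x, F x ∂(gaussianCov A) := by
    intro i F hF
    rw [← hlaw i, integral_map (hmeas i).aemeasurable hF.aestronglyMeasurable]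
  have hint : ∀ (i : Fin n) (F : (Fin p → ℝ) → ℝ), Continuous F →
      Integrable F (gaussianCov A) → Integrable (fun ω => F (z i ω)) μ := by
    intro i F hF hFi
    rw [← hlaw i] at hFi
    exact (integrable_map_measure hF.aestronglyMeasurable (hmeas i).aemeasurable).mp hFi
  -- continuity facts
  have hcont2 : ∀ k l : Fin p, Continuous (fun x : Fin p → ℝ => x k * x l) :=
    fun k l => (continuous_apply k).mul (continuous_apply l)
  have hcontF2 : Continuous (fun x : Fin p → ℝ => ∑ k, x k * x k) :=
    continuous_finset_sum _ (fun k _ => hcont2 k k)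
  have hcontF2sq : Continuous (fun x : Fin p → ℝ => (∑ k, x k * x k) * (∑ l, x l * x l)) :=
    hcontF2.mul hcontF2
  have hcov2mu : ∀ (i : Fin n) (k l : Fin p),
      (∫ ω, z i ω k * z i ω l ∂μ) = (A * Aᵀ) k l := by
    intro i k l
    rw [← cov2 A k l, ← hlaw i,
      integral_map (hmeas i).aemeasurable (hcont2 k l).aestronglyMeasurable]
  -- covariance-measure level values
  have covD : ∫ x, (∑ k, x k * x k) ∂(gaussianCov A) = T1 := by
    rw [integral_finset_sum _ (fun k _ => integrable_cov2 A k k)]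
    rw [hT1def, Matrix.trace]
    exact Finset.sum_congr rfl (fun k _ => cov2 A k k)
  have hcovF2mu : ∀ i : Fin n, (∫ ω, (∑ k, z i ω k * z i ω k) ∂μ) = T1 := by
    intro i
    rw [← covD, ← hlaw i,
      integral_map (hmeas i).aemeasurable hcontF2.aestronglyMeasurable]
  have covF2sq_int :
      Integrable (fun x : Fin p → ℝ => (∑ k, x k * x k) * (∑ l, x l * x l)) (gaussianCov A) := by
    have hx : (fun x : Fin p → ℝ => (∑ k, x k * x k) * (∑ l, x l * x l))
        = fun x => ∑ k, ∑ l, x k * x k * (x l * x l) :=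
      funext fun x => Finset.sum_mul_sum _ _ _ _
    rw [hx]
    exact integrable_finset_sum _ (fun k _ => integrable_finset_sum _
      (fun l _ => integrable_cov4 A k k l l))
  have covDD : ∫ x, (∑ k, x k * x k) * (∑ l, x l * x l) ∂(gaussianCov A) = 2 * T2 + T1 ^ 2 := by
    have hx : (fun x : Fin p → ℝ => (∑ k, x k * x k) * (∑ l, x l * x l))
        = fun x => ∑ k, ∑ l, x k * x k * (x l * x l) :=
      funext fun x => Finset.sum_mul_sum _ _ _ _
    rw [hx]
    rw [integral_finset_sum _ (fun k _ => integrable_finset_sum _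
      (fun l _ => integrable_cov4 A k k l l))]
    have h1 : ∀ k : Fin p, ∫ x, (∑ l, x k * x k * (x l * x l)) ∂(gaussianCov A)
        = ∑ l, ((A * Aᵀ) k k * (A * Aᵀ) l l + 2 * ((A * Aᵀ) k l * (A * Aᵀ) k l)) := by
      intro k
      rw [integral_finset_sum _ (fun l _ => integrable_cov4 A k k l l)]
      refine Finset.sum_congr rfl (fun l _ => ?_)
      rw [cov4 A k k l l]; ring
    rw [Finset.sum_congr rfl (fun k _ => h1 k)]
    have h2 : ∑ k, ∑ l, ((A * Aᵀ) k k * (A * Aᵀ) l l + 2 * ((A * Aᵀ) k l * (A * Aᵀ) k l))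
        = (∑ k, ∑ l, (A * Aᵀ) k k * (A * Aᵀ) l l)
          + 2 * ∑ k, ∑ l, (A * Aᵀ) k l * (A * Aᵀ) k l := by
      rw [Finset.mul_sum]
      rw [← Finset.sum_add_distrib]
      refine Finset.sum_congr rfl (fun k _ => ?_)
      rw [Finset.mul_sum, ← Finset.sum_add_distrib]
    rw [h2, hT2sum, ← Finset.sum_mul_sum]
    have hd : ∑ k, (A * Aᵀ) k k = T1 := by
      rw [hT1def]; simp [Matrix.trace, Matrix.diag]
    rw [hd]
    ring
  -- the per-pair expectations
  have hQval : ∀ i j : Fin n, ∫ ω, (∑ k, z i ω k * z j ω k) ^ 2 ∂μ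
      = if i = j then 2 * T2 + T1 ^ 2 else T2 := by
    intro i j
    by_cases hij : i = j
    · subst hij
      rw [if_pos rfl]
      have hx : ∀ ω, (∑ k, z i ω k * z i ω k) ^ 2
          = (fun x : Fin p → ℝ => (∑ k, x k * x k) * (∑ l, x l * x l)) (z i ω) := by
        intro ω; rw [pow_two]
      simp_rw [hx]
      rw [htrans i _ hcontF2sq, covDD]
    · rw [if_neg hij]
      have hexp : ∀ ω, (∑ k, z i ω k * z j ω k) ^ 2
          = ∑ k, ∑ l, (z i ω k * z i ω l) * (z j ω k * z j ω l) := by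
        intro ω
        rw [pow_two, Finset.sum_mul_sum]
        apply Finset.sum_congr rfl; intro k _
        apply Finset.sum_congr rfl; intro l _
        ring
      simp_rw [hexp]
      have hterm_int : ∀ k l : Fin p,
          Integrable (fun ω => (z i ω k * z i ω l) * (z j ω k * z j ω l)) μ := by
        intro k l
        exact IndepFun.integrable_mul
          (((hindep.indepFun hij).comp (hcont2 k l).measurable (hcont2 k l).measurable))
          (hint i _ (hcont2 k l) (integrable_cov2 A k l))
          (hint j _ (hcont2 k l) (integrable_cov2 A k l))
      rw [integral_finset_sum _ (fun k _ => integrable_finset_sum _ (fun l _ => hterm_int k l))]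
      have h1 : ∀ k : Fin p, ∫ ω, (∑ l, (z i ω k * z i ω l) * (z j ω k * z j ω l)) ∂μ
          = ∑ l, (A * Aᵀ) k l * (A * Aᵀ) k l := by
        intro k
        rw [integral_finset_sum _ (fun l _ => hterm_int k l)]
        refine Finset.sum_congr rfl (fun l _ => ?_)
        have hm1 : AEStronglyMeasurable (fun ω => z i ω k * z i ω l) μ :=
          ((hzk i k).mul (hzk i l)).aestronglyMeasurable
        have hm2 : AEStronglyMeasurable (fun ω => z j ω k * z j ω l) μ :=
          ((hzk j k).mul (hzk j l)).aestronglyMeasurable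
        have key := IndepFun.integral_mul_eq_mul_integral
          ((hindep.indepFun hij).comp (hcont2 k l).measurable (hcont2 k l).measurable) hm1 hm2
        simp only [Function.comp_def, Pi.mul_def] at key
        rw [key, hcov2mu i k l, hcov2mu j k l]
      rw [Finset.sum_congr rfl (fun k _ => h1 k), hT2sum]
  have hQint : ∀ i j : Fin n, Integrable (fun ω => (∑ k, z i ω k * z j ω k) ^ 2) μ := by
    intro i j
    by_cases hij : i = j
    · subst hij
      have hx : (fun ω => (∑ k, z i ω k * z i ω k) ^ 2)
          = fun ω => (fun x : Fin p → ℝ => (∑ k, x k * x k) * (∑ l, x l * x l)) (z i ω) :=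
        funext fun ω => by rw [pow_two]
      rw [hx]
      exact hint i _ hcontF2sq covF2sq_int
    · have hexp : (fun ω => (∑ k, z i ω k * z j ω k) ^ 2)
          = fun ω => ∑ k, ∑ l, (z i ω k * z i ω l) * (z j ω k * z j ω l) := by
        funext ω
        rw [pow_two, Finset.sum_mul_sum]
        apply Finset.sum_congr rfl; intro k _
        apply Finset.sum_congr rfl; intro l _
        ring
      rw [hexp]
      refine integrable_finset_sum _ (fun k _ => integrable_finset_sum _ (fun l _ => ?_))
      exact IndepFun.integrable_mul
        (((hindep.indepFun hij).comp (hcont2 k l).measurable (hcont2 k l).measurable))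
        (hint i _ (hcont2 k l) (integrable_cov2 A k l))
        (hint j _ (hcont2 k l) (integrable_cov2 A k l))
  have hRval : ∀ i j : Fin n,
      ∫ ω, (∑ k, z i ω k * z i ω k) * (∑ l, z j ω l * z j ω l) ∂μ
        = if i = j then 2 * T2 + T1 ^ 2 else T1 ^ 2 := by
    intro i j
    by_cases hij : i = j
    · subst hij
      rw [if_pos rfl]
      rw [htrans i _ hcontF2sq, covDD]
    · rw [if_neg hij]
      have hm1 : AEStronglyMeasurable (fun ω => ∑ k, z i ω k * z i ω k) μ :=
        (Finset.measurable_sum _ (fun k _ => (hzk i k).mul (hzk i k))).aestronglyMeasurable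
      have hm2 : AEStronglyMeasurable (fun ω => ∑ l, z j ω l * z j ω l) μ :=
        (Finset.measurable_sum _ (fun l _ => (hzk j l).mul (hzk j l))).aestronglyMeasurable
      have key := IndepFun.integral_mul_eq_mul_integral
        ((hindep.indepFun hij).comp hcontF2.measurable hcontF2.measurable) hm1 hm2
      simp only [Function.comp_def, Pi.mul_def] at key
      rw [key, hcovF2mu i, hcovF2mu j, pow_two]
  have hRint : ∀ i j : Fin n,
      Integrable (fun ω => (∑ k, z i ω k * z i ω k) * (∑ l, z j ω l * z j ω l)) μ := by
    intro i j
    by_cases hij : i = j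
    · subst hij
      exact hint i _ hcontF2sq covF2sq_int
    · exact IndepFun.integrable_mul
        ((hindep.indepFun hij).comp hcontF2.measurable hcontF2.measurable)
        (hint i _ hcontF2 (by
          have : Integrable (fun x : Fin p → ℝ => ∑ k, x k * x k) (gaussianCov A) :=
            integrable_finset_sum _ (fun k _ => integrable_cov2 A k k)
          exact this))
        (hint j _ hcontF2 (integrable_finset_sum _ (fun k _ => integrable_cov2 A k k)))
  -- pointwise identity for the integrand
  have hn0 : (n : ℝ) ≠ 0 := by
    have : (2 : ℝ) ≤ (n : ℝ) := by exact_mod_cast hn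
    linarith
  have htr1 : ∀ ω, (sampleCov n z ω).trace = (n : ℝ)⁻¹ * ∑ i, ∑ k, z i ω k * z i ω k := by
    intro ω
    rw [sampleCov, Matrix.trace_smul, Matrix.trace_sum, smul_eq_mul]
    rw [Finset.sum_congr rfl (fun i _ => trace_vecMulVec (z i ω))]
  have htr2 : ∀ ω, (sampleCov n z ω * sampleCov n z ω).trace
      = (n : ℝ)⁻¹ * ((n : ℝ)⁻¹ * ∑ i, ∑ j, (∑ k, z i ω k * z j ω k) ^ 2) := by
    intro ω
    have key : ((∑ i, Matrix.vecMulVec (z i ω) (z i ω)) *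
        (∑ j, Matrix.vecMulVec (z j ω) (z j ω))).trace
        = ∑ i, ∑ j, (∑ k, z i ω k * z j ω k) ^ 2 := by
      rw [Matrix.sum_mul, Matrix.trace_sum]
      apply Finset.sum_congr rfl; intro i _
      rw [Matrix.mul_sum, Matrix.trace_sum]
      apply Finset.sum_congr rfl; intro j _
      exact trace_vecMulVec_mul _ _
    rw [sampleCov, Matrix.smul_mul, Matrix.mul_smul, Matrix.trace_smul, Matrix.trace_smul,
      smul_eq_mul, smul_eq_mul, key]
  have hpoint : (fun ω => ((n : ℝ) ^ 2 / (((n : ℝ) - 1) * ((n : ℝ) + 2))) *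
        ((sampleCov n z ω * sampleCov n z ω).trace - (sampleCov n z ω).trace ^ 2 / n))
      = fun ω =>
        (((n : ℝ) ^ 2 / (((n : ℝ) - 1) * ((n : ℝ) + 2))) * ((n : ℝ)⁻¹ * (n : ℝ)⁻¹)) *
            (∑ i, ∑ j, (∑ k, z i ω k * z j ω k) ^ 2)
          - (((n : ℝ) ^ 2 / (((n : ℝ) - 1) * ((n : ℝ) + 2))) *
              ((n : ℝ)⁻¹ * ((n : ℝ)⁻¹ * (n : ℝ)⁻¹))) *
            (∑ i, ∑ j, (∑ k, z i ω k * z i ω k) * (∑ l, z j ω l * z j ω l)) := by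
    funext ω
    rw [htr1 ω, htr2 ω]
    have hLL : (∑ i, ∑ j, (∑ k, z i ω k * z i ω k) * (∑ l, z j ω l * z j ω l))
        = (∑ i, ∑ k, z i ω k * z i ω k) * (∑ j, ∑ l, z j ω l * z j ω l) :=
      (Finset.sum_mul_sum _ _ _ _).symm
    rw [hLL]
    ring
  rw [hpoint]
  have hQsum_int : Integrable (fun ω => ∑ i, ∑ j, (∑ k, z i ω k * z j ω k) ^ 2) μ :=
    integrable_finset_sum _ (fun i _ => integrable_finset_sum _ (fun j _ => hQint i j))
  have hRsum_int : Integrable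
      (fun ω => ∑ i, ∑ j, (∑ k, z i ω k * z i ω k) * (∑ l, z j ω l * z j ω l)) μ :=
    integrable_finset_sum _ (fun i _ => integrable_finset_sum _ (fun j _ => hRint i j))
  rw [integral_sub (hQsum_int.const_mul _) (hRsum_int.const_mul _),
    integral_const_mul, integral_const_mul]
  have eQ : ∫ ω, (∑ i, ∑ j, (∑ k, z i ω k * z j ω k) ^ 2) ∂μ
      = (n : ℝ) * (2 * T2 + T1 ^ 2) + ((n : ℝ) ^ 2 - (n : ℝ)) * T2 := by
    rw [integral_finset_sum _ (fun i _ => integrable_finset_sum _ (fun j _ => hQint i j))]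
    have h1 : ∀ i : Fin n, ∫ ω, (∑ j, (∑ k, z i ω k * z j ω k) ^ 2) ∂μ
        = ∑ j, if i = j then 2 * T2 + T1 ^ 2 else T2 := by
      intro i
      rw [integral_finset_sum _ (fun j _ => hQint i j)]
      exact Finset.sum_congr rfl (fun j _ => hQval i j)
    rw [Finset.sum_congr rfl (fun i _ => h1 i), sum_ite_diag]
  have eR : ∫ ω, (∑ i, ∑ j, (∑ k, z i ω k * z i ω k) * (∑ l, z j ω l * z j ω l)) ∂μ
      = (n : ℝ) * (2 * T2 + T1 ^ 2) + ((n : ℝ) ^ 2 - (n : ℝ)) * T1 ^ 2 := by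
    rw [integral_finset_sum _ (fun i _ => integrable_finset_sum _ (fun j _ => hRint i j))]
    have h1 : ∀ i : Fin n, ∫ ω, (∑ j, (∑ k, z i ω k * z i ω k) * (∑ l, z j ω l * z j ω l)) ∂μ
        = ∑ j, if i = j then 2 * T2 + T1 ^ 2 else T1 ^ 2 := by
      intro i
      rw [integral_finset_sum _ (fun j _ => hRint i j)]
      exact Finset.sum_congr rfl (fun j _ => hRval i j)
    rw [Finset.sum_congr rfl (fun i _ => h1 i), sum_ite_diag]
  rw [eQ, eR]
  have h2n : (2 : ℝ) ≤ (n : ℝ) := by exact_mod_cast hn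
  have hm1 : (n : ℝ) - 1 ≠ 0 := by linarith
  have hp2 : (n : ℝ) + 2 ≠ 0 := by linarith
  field_simp
  ring
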